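/- Let f, g : ℝ × ℝ → ℝ satisfy f(0,0) = 0, g(0,0) = 1, with f_x, f_t continuous near (0,0), g continuous and locally Lipschitz in x, and θ := f_x(0,0) < 0. If x, y are continuous on [0,T], C¹ on (0,T], and both solve z(0)=0, z'(t) = f(z(t),t)/∫₀ᵗ g(z(s),s) ds on (0,T], then there exists t* ∈ (0,T] with x = y on [0,t*]. -/

import Mathlib

open Real Set Filter intervalIntegral

private lemma key_contra (f g fx : ℝ → ℝ → ℝ) (K' θ r₀ tstar T : ℝ) (x y : ℝ → ℝ)
    (hK' : 0 < K') (hθn : θ < 0)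
    (hball : ∀ p : ℝ × ℝ, dist p ((0:ℝ),(0:ℝ)) ≤ r₀ →
      fx p.1 p.2 ≤ θ/2 ∧ 1/2 ≤ g p.1 p.2 ∧ g p.1 p.2 ≤ 2 ∧ |f p.1 p.2| ≤ -θ/(32*K'))
    (hder : ∀ p : ℝ × ℝ, dist p ((0:ℝ),(0:ℝ)) ≤ r₀ →
      HasDerivAt (fun a => f a p.2) (fx p.1 p.2) p.1)
    (hlip : ∀ q q' : ℝ × ℝ, dist q ((0:ℝ),(0:ℝ)) ≤ r₀ → dist q' ((0:ℝ),(0:ℝ)) ≤ r₀ →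
      q.2 = q'.2 → |g q.1 q.2 - g q'.1 q'.2| ≤ K' * |q.1 - q'.1|)
    (hgcball : ContinuousOn (fun p : ℝ × ℝ => g p.1 p.2) (Metric.closedBall ((0:ℝ),(0:ℝ)) r₀))
    (htpos : 0 < tstar) (htT : tstar ≤ T) (htr : tstar ≤ r₀)
    (hxc : ContinuousOn x (Set.Icc 0 T)) (hyc : ContinuousOn y (Set.Icc 0 T))
    (hxd : ∀ t ∈ Set.Ioc (0:ℝ) T,
      HasDerivAt x (f (x t) t / ∫ s in (0:ℝ)..t, g (x s) s) t)
    (hyd : ∀ t ∈ Set.Ioc (0:ℝ) T,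
      HasDerivAt y (f (y t) t / ∫ s in (0:ℝ)..t, g (y s) s) t)
    (hxr : ∀ s ∈ Set.Icc (0:ℝ) tstar, |x s| ≤ r₀)
    (hyr : ∀ s ∈ Set.Icc (0:ℝ) tstar, |y s| ≤ r₀)
    (hx0 : x 0 = 0) (hy0 : y 0 = 0)
    (s0 : ℝ) (hs0 : s0 ∈ Set.Icc (0:ℝ) tstar)
    (hmax : ∀ u ∈ Set.Icc (0:ℝ) tstar, |x u - y u| ≤ x s0 - y s0)
    (hm : 0 < x s0 - y s0) : False := by
  -- s0 is positive
  have hs0pos : 0 < s0 := by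
    rcases hs0.1.lt_or_eq with h | h
    · exact h
    · exfalso; rw [← h, hx0, hy0] at hm; linarith
  set m : ℝ := x s0 - y s0 with hmdef
  -- ball membership of the curves
  have hxball : ∀ s ∈ Set.Icc (0:ℝ) tstar,
      dist ((x s, s) : ℝ × ℝ) ((0:ℝ),(0:ℝ)) ≤ r₀ := by
    intro s hs
    rw [Prod.dist_eq]
    refine max_le ?_ ?_
    · simpa [Real.dist_eq] using hxr s hs
    · rw [Real.dist_eq, sub_zero, abs_of_nonneg hs.1]; exact hs.2.trans htr
  have hyball : ∀ s ∈ Set.Icc (0:ℝ) tstar,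
      dist ((y s, s) : ℝ × ℝ) ((0:ℝ),(0:ℝ)) ≤ r₀ := by
    intro s hs
    rw [Prod.dist_eq]
    refine max_le ?_ ?_
    · simpa [Real.dist_eq] using hyr s hs
    · rw [Real.dist_eq, sub_zero, abs_of_nonneg hs.1]; exact hs.2.trans htr
  have hsubT : Set.Icc (0:ℝ) s0 ⊆ Set.Icc 0 T := Set.Icc_subset_Icc le_rfl (hs0.2.trans htT)
  have hsubt : Set.Icc (0:ℝ) s0 ⊆ Set.Icc 0 tstar := Set.Icc_subset_Icc le_rfl hs0.2
  -- continuity and integrability of g along curves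
  have hcx : ContinuousOn (fun u => g (x u) u) (Set.Icc 0 s0) := by
    have hcurve : ContinuousOn (fun u => ((x u, u) : ℝ × ℝ)) (Set.Icc 0 s0) :=
      (hxc.mono hsubT).prodMk continuousOn_id
    exact hgcball.comp hcurve fun u hu =>
      Metric.mem_closedBall.mpr (hxball u (hsubt hu))
  have hcy : ContinuousOn (fun u => g (y u) u) (Set.Icc 0 s0) := by
    have hcurve : ContinuousOn (fun u => ((y u, u) : ℝ × ℝ)) (Set.Icc 0 s0) :=
      (hyc.mono hsubT).prodMk continuousOn_id
    exact hgcball.comp hcurve fun u hu =>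
      Metric.mem_closedBall.mpr (hyball u (hsubt hu))
  have hIx_int : IntervalIntegrable (fun u => g (x u) u) MeasureTheory.volume 0 s0 := by
    apply ContinuousOn.intervalIntegrable; rwa [Set.uIcc_of_le hs0pos.le]
  have hIy_int : IntervalIntegrable (fun u => g (y u) u) MeasureTheory.volume 0 s0 := by
    apply ContinuousOn.intervalIntegrable; rwa [Set.uIcc_of_le hs0pos.le]
  set Ix : ℝ := ∫ u in (0:ℝ)..s0, g (x u) u with hIxdef
  set Iy : ℝ := ∫ u in (0:ℝ)..s0, g (y u) u with hIydef
  -- bounds on integrals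
  have hconst_eq : ∀ c : ℝ, (∫ _ in (0:ℝ)..s0, c) = s0 * c := by
    intro c; rw [intervalIntegral.integral_const]; simp [smul_eq_mul]
  have hIxlb : s0/2 ≤ Ix := by
    have := intervalIntegral.integral_mono_on (μ := MeasureTheory.volume) hs0pos.le
      (_root_.intervalIntegrable_const (c := (1/2:ℝ))) hIx_int
      (fun u hu => (hball _ (hxball u (hsubt hu))).2.1)
    rw [hconst_eq] at this; linarith
  have hIxub : Ix ≤ 2*s0 := by
    have := intervalIntegral.integral_mono_on (μ := MeasureTheory.volume) hs0pos.le
      hIx_int (_root_.intervalIntegrable_const (c := (2:ℝ)))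
      (fun u hu => (hball _ (hxball u (hsubt hu))).2.2.1)
    rw [hconst_eq] at this; linarith
  have hIylb : s0/2 ≤ Iy := by
    have := intervalIntegral.integral_mono_on (μ := MeasureTheory.volume) hs0pos.le
      (_root_.intervalIntegrable_const (c := (1/2:ℝ))) hIy_int
      (fun u hu => (hball _ (hyball u (hsubt hu))).2.1)
    rw [hconst_eq] at this; linarith
  have hIypos : 0 < Iy := lt_of_lt_of_le (by linarith) hIylb
  have hIxpos : 0 < Ix := lt_of_lt_of_le (by linarith) hIxlb
  -- the derivative of x - y at s0
  have hs0T : s0 ∈ Set.Ioc (0:ℝ) T := ⟨hs0pos, hs0.2.trans htT⟩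
  have hwd : HasDerivAt (fun t => x t - y t) (f (x s0) s0 / Ix - f (y s0) s0 / Iy) s0 :=
    (hxd s0 hs0T).sub (hyd s0 hs0T)
  -- the derivative is nonnegative (maximum approached from the left)
  have hD0 : 0 ≤ f (x s0) s0 / Ix - f (y s0) s0 / Iy := by
    have hslope := hasDerivAt_iff_tendsto_slope.mp hwd
    have hslope' : Tendsto (slope (fun t => x t - y t) s0) (nhdsWithin s0 (Set.Iio s0))
        (nhds (f (x s0) s0 / Ix - f (y s0) s0 / Iy)) :=
      hslope.mono_left (nhdsWithin_mono _ (fun u hu => ne_of_lt hu))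
    refine ge_of_tendsto hslope' ?_
    filter_upwards [Ioo_mem_nhdsLT_of_mem (Set.mem_Ioc.mpr ⟨hs0pos, le_rfl⟩)] with u hu
    have humem : u ∈ Set.Icc (0:ℝ) tstar := ⟨hu.1.le, hu.2.le.trans hs0.2⟩
    have h1 : x u - y u ≤ m := le_trans (le_abs_self _) (hmax u humem)
    have h2 : u - s0 < 0 := by linarith [hu.2]
    rw [slope_def_field]
    rw [div_nonneg_iff]
    right
    constructor
    · show x u - y u - (x s0 - y s0) ≤ 0; linarith
    · linarith
  -- Mean value theorem for f in the first variable
  set X : ℝ := x s0 with hXdef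
  set Y : ℝ := y s0 with hYdef
  have hYX : Y < X := by dsimp [X, Y]; linarith
  have hseg : ∀ a ∈ Set.Icc Y X, dist ((a, s0) : ℝ × ℝ) ((0:ℝ),(0:ℝ)) ≤ r₀ := by
    intro a ha
    rw [Prod.dist_eq]
    refine max_le ?_ ?_
    · rw [Real.dist_eq, sub_zero]
      have hX := abs_le.mp (hxr s0 hs0)
      have hY := abs_le.mp (hyr s0 hs0)
      exact abs_le.mpr ⟨by linarith [ha.1], by linarith [ha.2]⟩
    · rw [Real.dist_eq, sub_zero, abs_of_nonneg hs0pos.le]; exact hs0.2.trans htr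
  obtain ⟨ξ, hξmem, hξ⟩ := exists_hasDerivAt_eq_slope (fun a => f a s0) (fun a => fx a s0)
    hYX
    (fun a ha => ((hder (a, s0) (hseg a ha)).continuousAt).continuousWithinAt)
    (fun a ha => hder (a, s0) (hseg a (Set.Ioo_subset_Icc_self ha)))
  have hXYm : X - Y = m := rfl
  have hfd : f X s0 - f Y s0 = fx ξ s0 * m := by
    rw [eq_div_iff (sub_ne_zero.mpr (ne_of_gt hYX))] at hξ
    rw [← hξ, hXYm]
  have hξball : fx ξ s0 ≤ θ/2 := (hball _ (hseg ξ (Set.Ioo_subset_Icc_self hξmem))).1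
  -- bound on |Iy - Ix|
  have hdiff : |Iy - Ix| ≤ K' * m * s0 := by
    have hsub : Iy - Ix = ∫ u in (0:ℝ)..s0, (g (y u) u - g (x u) u) :=
      (intervalIntegral.integral_sub hIy_int hIx_int).symm
    rw [hsub]
    have hbd : ∀ u ∈ Set.uIoc (0:ℝ) s0, ‖g (y u) u - g (x u) u‖ ≤ K' * m := by
      intro u hu
      rw [Set.uIoc_of_le hs0pos.le] at hu
      have humem : u ∈ Set.Icc (0:ℝ) tstar := ⟨hu.1.le, hu.2.trans hs0.2⟩
      have h1 := hlip (y u, u) (x u, u) (hyball u humem) (hxball u humem) rfl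
      rw [Real.norm_eq_abs]
      refine h1.trans ?_
      have h2 : |y u - x u| ≤ m := by
        rw [abs_sub_comm]; exact hmax u humem
      exact mul_le_mul_of_nonneg_left h2 hK'.le
    have := intervalIntegral.norm_integral_le_of_norm_le_const hbd
    rw [Real.norm_eq_abs, sub_zero, abs_of_nonneg hs0pos.le] at this
    linarith
  -- decompose the derivative
  have hkey : f X s0 / Ix - f Y s0 / Iy
      = (fx ξ s0 * m)/Ix + f Y s0 * (Iy - Ix)/(Ix*Iy) := by
    rw [← hfd]; field_simp; ring
  -- first term bound
  have hA1 : fx ξ s0 * m ≤ θ/2 * m := mul_le_mul_of_nonneg_right hξball hm.le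
  have hA2 : (fx ξ s0 * m)/Ix ≤ (θ/2*m)/Ix := by
    exact div_le_div_of_nonneg_right hA1 hIxpos.le
  have hA3 : (θ/2*m)/Ix ≤ (θ/2*m)/(2*s0) := by
    have hn : 0 < -(θ/2*m) := by nlinarith
    have h := div_le_div_of_nonneg_left hn.le hIxpos hIxub
    rw [neg_div, neg_div] at h
    linarith
  -- second term bound
  have hfY : |f Y s0| ≤ -θ/(32*K') := (hball _ (hseg Y ⟨le_rfl, hYX.le⟩)).2.2.2
  have hB : |f Y s0 * (Iy - Ix)/(Ix*Iy)| ≤ (-θ/(32*K')) * (K'*m*s0) / ((s0/2)*(s0/2)) := by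
    rw [abs_div, abs_mul, abs_of_pos (mul_pos hIxpos hIypos)]
    apply div_le_div₀
    · apply mul_nonneg
      · apply div_nonneg (by linarith) (by positivity)
      · positivity
    · exact mul_le_mul hfY hdiff (abs_nonneg _) (div_nonneg (by linarith) (by positivity))
    · positivity
    · exact mul_le_mul hIxlb hIylb (by positivity) hIxpos.le
  have hBeq : (-θ/(32*K')) * (K'*m*s0) / ((s0/2)*(s0/2)) = -θ*m/(8*s0) := by
    field_simp
    ring
  have hB' : f Y s0 * (Iy - Ix)/(Ix*Iy) ≤ -θ*m/(8*s0) := by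
    rw [hBeq] at hB
    exact (le_abs_self _).trans hB
  -- combine
  have hAeq : (θ/2*m)/(2*s0) = θ*m/(4*s0) := by ring
  have hfinal : f X s0 / Ix - f Y s0 / Iy ≤ θ*m/(4*s0) + -θ*m/(8*s0) := by
    rw [hkey, ← hAeq]
    have := hA2.trans hA3
    linarith
  have hsum : θ*m/(4*s0) + -θ*m/(8*s0) = θ*m/(8*s0) := by
    field_simp
    ring
  have hneg : θ*m/(8*s0) < 0 :=
    div_neg_of_neg_of_pos (mul_neg_of_neg_of_pos hθn hm) (by linarith)
  rw [hsum] at hfinal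
  exact absurd hD0 (by push_neg; linarith)

theorem stmt_16 (f g fx ft : ℝ → ℝ → ℝ)
    (U : Set (ℝ × ℝ)) (hU : IsOpen U) (h0U : ((0:ℝ), (0:ℝ)) ∈ U)
    (hf0 : f 0 0 = 0) (hg0 : g 0 0 = 1)
    (hfc : ContinuousOn (fun p : ℝ × ℝ => f p.1 p.2) U)
    (hfx : ∀ p ∈ U, HasDerivAt (fun x => f x p.2) (fx p.1 p.2) p.1)
    (hft : ∀ p ∈ U, HasDerivAt (fun t => f p.1 t) (ft p.1 p.2) p.2)
    (hfxc : ContinuousOn (fun p : ℝ × ℝ => fx p.1 p.2) U)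
    (hftc : ContinuousOn (fun p : ℝ × ℝ => ft p.1 p.2) U)
    (hgc : ContinuousOn (fun p : ℝ × ℝ => g p.1 p.2) U)
    (hglip : ∀ p ∈ U, ∃ K : ℝ, ∃ V ∈ nhds p, ∀ q ∈ V, ∀ q' ∈ V,
      (q : ℝ × ℝ).2 = (q' : ℝ × ℝ).2 → |g q.1 q.2 - g q'.1 q'.2| ≤ K * |q.1 - q'.1|)
    (hθ : fx 0 0 < 0)
    (T : ℝ) (hT : 0 < T) (x y : ℝ → ℝ)
    -- x, y ∈ C[0,T] ∩ C¹(0,T] solve the singular integro-differential equation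
    (hx0 : x 0 = 0) (hxc : ContinuousOn x (Set.Icc 0 T))
    (hxd : ∀ t ∈ Set.Ioc (0:ℝ) T,
      HasDerivAt x (f (x t) t / ∫ s in (0:ℝ)..t, g (x s) s) t)
    (hy0 : y 0 = 0) (hyc : ContinuousOn y (Set.Icc 0 T))
    (hyd : ∀ t ∈ Set.Ioc (0:ℝ) T,
      HasDerivAt y (f (y t) t / ∫ s in (0:ℝ)..t, g (y s) s) t) :
    ∃ tstar ∈ Set.Ioc (0:ℝ) T, ∀ t ∈ Set.Icc (0:ℝ) tstar, x t = y t := by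
  set θ : ℝ := fx 0 0 with hθdef
  obtain ⟨K, V, hV, hK⟩ := hglip (0,0) h0U
  set K' : ℝ := max K 1 with hK'def
  have hK'pos : (0:ℝ) < K' := lt_of_lt_of_le one_pos (le_max_right _ _)
  have hε₀pos : 0 < -θ/(32*K') := div_pos (by linarith) (by positivity)
  have hUnhds : U ∈ nhds ((0:ℝ),(0:ℝ)) := hU.mem_nhds h0U
  have hfxA : ContinuousAt (fun p : ℝ × ℝ => fx p.1 p.2) ((0:ℝ),(0:ℝ)) :=
    hfxc.continuousAt hUnhds
  have hgA : ContinuousAt (fun p : ℝ × ℝ => g p.1 p.2) ((0:ℝ),(0:ℝ)) :=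
    hgc.continuousAt hUnhds
  have hfA : ContinuousAt (fun p : ℝ × ℝ => f p.1 p.2) ((0:ℝ),(0:ℝ)) :=
    hfc.continuousAt hUnhds
  have E1 : ∀ᶠ p : ℝ × ℝ in nhds ((0:ℝ),(0:ℝ)), fx p.1 p.2 ≤ θ/2 := by
    have hmem : Set.Iio (θ/2) ∈ nhds (fx (0:ℝ) (0:ℝ)) := Iio_mem_nhds (by linarith)
    filter_upwards [hfxA hmem] with p hp
    exact le_of_lt hp
  have E2 : ∀ᶠ p : ℝ × ℝ in nhds ((0:ℝ),(0:ℝ)),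
      1/2 ≤ g p.1 p.2 ∧ g p.1 p.2 ≤ 2 := by
    have hmem : Set.Ioo (1/2 : ℝ) 2 ∈ nhds (g (0:ℝ) (0:ℝ)) := by
      rw [hg0]; exact Ioo_mem_nhds (by norm_num) (by norm_num)
    filter_upwards [hgA hmem] with p hp
    exact ⟨le_of_lt hp.1, le_of_lt hp.2⟩
  have E3 : ∀ᶠ p : ℝ × ℝ in nhds ((0:ℝ),(0:ℝ)), |f p.1 p.2| ≤ -θ/(32*K') := by
    have hmem : Set.Ioo (-(-θ/(32*K'))) (-θ/(32*K')) ∈ nhds (f (0:ℝ) (0:ℝ)) := by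
      rw [hf0]; exact Ioo_mem_nhds (by linarith) hε₀pos
    filter_upwards [hfA hmem] with p hp
    exact le_of_lt (abs_lt.mpr ⟨hp.1, hp.2⟩)
  have hall : ∀ᶠ p : ℝ × ℝ in nhds ((0:ℝ),(0:ℝ)),
      (p ∈ U ∧ p ∈ V) ∧ (fx p.1 p.2 ≤ θ/2 ∧ 1/2 ≤ g p.1 p.2 ∧ g p.1 p.2 ≤ 2 ∧
        |f p.1 p.2| ≤ -θ/(32*K')) := by
    filter_upwards [hUnhds, hV, E1, E2, E3] with p h1 h2 h3 h4 h5
    exact ⟨⟨h1, h2⟩, h3, h4.1, h4.2, h5⟩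
  obtain ⟨r, hrpos, hr⟩ := Metric.eventually_nhds_iff.mp hall
  set r₀ : ℝ := r/2 with hr₀def
  have hr₀pos : 0 < r₀ := by positivity
  have hball' : ∀ p : ℝ × ℝ, dist p ((0:ℝ),(0:ℝ)) ≤ r₀ →
      (p ∈ U ∧ p ∈ V) ∧ (fx p.1 p.2 ≤ θ/2 ∧ 1/2 ≤ g p.1 p.2 ∧ g p.1 p.2 ≤ 2 ∧
        |f p.1 p.2| ≤ -θ/(32*K')) :=
    fun p hp => hr (lt_of_le_of_lt hp (by simp [hr₀def]; linarith))
  have hball : ∀ p : ℝ × ℝ, dist p ((0:ℝ),(0:ℝ)) ≤ r₀ →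
      fx p.1 p.2 ≤ θ/2 ∧ 1/2 ≤ g p.1 p.2 ∧ g p.1 p.2 ≤ 2 ∧ |f p.1 p.2| ≤ -θ/(32*K') :=
    fun p hp => (hball' p hp).2
  have hder : ∀ p : ℝ × ℝ, dist p ((0:ℝ),(0:ℝ)) ≤ r₀ →
      HasDerivAt (fun a => f a p.2) (fx p.1 p.2) p.1 :=
    fun p hp => hfx p (hball' p hp).1.1
  have hlip : ∀ q q' : ℝ × ℝ, dist q ((0:ℝ),(0:ℝ)) ≤ r₀ → dist q' ((0:ℝ),(0:ℝ)) ≤ r₀ →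
      q.2 = q'.2 → |g q.1 q.2 - g q'.1 q'.2| ≤ K' * |q.1 - q'.1| := by
    intro q q' hq hq' he
    exact le_trans (hK q (hball' q hq).1.2 q' (hball' q' hq').1.2 he)
      (mul_le_mul_of_nonneg_right (le_max_left K 1) (abs_nonneg _))
  have hgcball : ContinuousOn (fun p : ℝ × ℝ => g p.1 p.2)
      (Metric.closedBall ((0:ℝ),(0:ℝ)) r₀) :=
    hgc.mono (fun p hp => (hball' p (Metric.mem_closedBall.mp hp)).1.1)
  -- choose tstar
  have h0T : (0:ℝ) ∈ Set.Icc (0:ℝ) T := ⟨le_rfl, hT.le⟩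
  have hxc0 : Tendsto x (nhdsWithin 0 (Set.Icc 0 T)) (nhds 0) := by
    have := hxc 0 h0T; rwa [ContinuousWithinAt, hx0] at this
  have hyc0 : Tendsto y (nhdsWithin 0 (Set.Icc 0 T)) (nhds 0) := by
    have := hyc 0 h0T; rwa [ContinuousWithinAt, hy0] at this
  have hxev : {s : ℝ | |x s| ≤ r₀} ∈ nhdsWithin 0 (Set.Icc 0 T) := by
    have hmem : Metric.closedBall (0:ℝ) r₀ ∈ nhds (0:ℝ) :=
      Metric.closedBall_mem_nhds _ hr₀pos
    filter_upwards [hxc0 hmem] with s hs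
    simpa [Real.dist_eq] using Metric.mem_closedBall.mp hs
  have hyev : {s : ℝ | |y s| ≤ r₀} ∈ nhdsWithin 0 (Set.Icc 0 T) := by
    have hmem : Metric.closedBall (0:ℝ) r₀ ∈ nhds (0:ℝ) :=
      Metric.closedBall_mem_nhds _ hr₀pos
    filter_upwards [hyc0 hmem] with s hs
    simpa [Real.dist_eq] using Metric.mem_closedBall.mp hs
  obtain ⟨δx, hδxpos, hδx⟩ := Metric.mem_nhdsWithin_iff.mp hxev
  obtain ⟨δy, hδypos, hδy⟩ := Metric.mem_nhdsWithin_iff.mp hyev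
  set tstar : ℝ := min (min (δx/2) (δy/2)) (min r₀ T) with htsdef
  have htpos : 0 < tstar := by
    apply lt_min (lt_min (by linarith) (by linarith)) (lt_min hr₀pos hT)
  have htT : tstar ≤ T := le_trans (min_le_right _ _) (min_le_right _ _)
  have htr : tstar ≤ r₀ := le_trans (min_le_right _ _) (min_le_left _ _)
  have htδx : tstar ≤ δx/2 := le_trans (min_le_left _ _) (min_le_left _ _)
  have htδy : tstar ≤ δy/2 := le_trans (min_le_left _ _) (min_le_right _ _)
  have hxr : ∀ s ∈ Set.Icc (0:ℝ) tstar, |x s| ≤ r₀ := by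
    intro s hs
    apply hδx
    refine ⟨Metric.mem_ball.mpr ?_, ⟨hs.1, hs.2.trans htT⟩⟩
    rw [Real.dist_eq, sub_zero, abs_of_nonneg hs.1]
    linarith [hs.2]
  have hyr : ∀ s ∈ Set.Icc (0:ℝ) tstar, |y s| ≤ r₀ := by
    intro s hs
    apply hδy
    refine ⟨Metric.mem_ball.mpr ?_, ⟨hs.1, hs.2.trans htT⟩⟩
    rw [Real.dist_eq, sub_zero, abs_of_nonneg hs.1]
    linarith [hs.2]
  -- maximum of |x - y| on [0, tstar]
  have hsub : Set.Icc (0:ℝ) tstar ⊆ Set.Icc (0:ℝ) T := Set.Icc_subset_Icc le_rfl htT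
  have hwcont : ContinuousOn (fun u => |x u - y u|) (Set.Icc (0:ℝ) tstar) :=
    ((hxc.mono hsub).sub (hyc.mono hsub)).abs
  obtain ⟨s0, hs0mem, hs0max⟩ :=
    isCompact_Icc.exists_isMaxOn (Set.nonempty_Icc.mpr htpos.le) hwcont
  have hmax : ∀ u ∈ Set.Icc (0:ℝ) tstar, |x u - y u| ≤ |x s0 - y s0| := hs0max
  rcases lt_trichotomy (x s0 - y s0) 0 with hneg | hzero | hpos
  · exact (key_contra f g fx K' θ r₀ tstar T y x hK'pos hθ hball hder hlip hgcball
      htpos htT htr hyc hxc hyd hxd hyr hxr hy0 hx0 s0 hs0mem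
      (fun u hu => by
        rw [abs_sub_comm]
        exact (hmax u hu).trans_eq (by rw [abs_of_neg hneg]; ring))
      (by linarith)).elim
  · refine ⟨tstar, ⟨htpos, htT⟩, fun t ht => ?_⟩
    have h1 := hmax t ht
    rw [hzero, abs_zero] at h1
    have h2 := abs_nonneg (x t - y t)
    have h3 : x t - y t = 0 := abs_eq_zero.mp (le_antisymm h1 h2)
    linarith
  · exact (key_contra f g fx K' θ r₀ tstar T x y hK'pos hθ hball hder hlip hgcball
      htpos htT htr hxc hyc hxd hyd hxr hyr hx0 hy0 s0 hs0mem
      (fun u hu => (hmax u hu).trans_eq (abs_of_pos hpos))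
      hpos).elim
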